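/- Let k be a commutative ring, λ ∈ k, and let M be the free k-module with basis {u_n : n ≥ 0}. Let Δ : M → M ⊗ M be the k-linear map with Δ(u_0) = u_0 ⊗ u_0 and Δ(u_n) = Σ_{r=0}^{n} u_r ⊗ u_{n−r} + λ·Σ_{r=0}^{n−1} u_r ⊗ u_{n−1−r} for n ≥ 1. Then Δ is coassociative: (Δ ⊗ id) ∘ Δ = (id ⊗ Δ) ∘ Δ as maps M → M ⊗ M ⊗ M. -/

import Mathlib

open TensorProduct

section aux

open Finset

private lemma triA {M : Type*} [AddCommMonoid M] (f : ℕ → ℕ → ℕ → M) (n : ℕ) :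
    ∑ r ∈ range (n + 1), ∑ s ∈ range (r + 1), f s (r - s) (n - r)
      = ∑ r ∈ range (n + 1), ∑ s ∈ range (n - r + 1), f r s (n - r - s) := by
  rw [Finset.sum_sigma', Finset.sum_sigma']
  refine Finset.sum_nbij' (fun p => ⟨p.2, p.1 - p.2⟩) (fun p => ⟨p.1 + p.2, p.1⟩) ?_ ?_ ?_ ?_ ?_
  · rintro ⟨r, s⟩ h
    simp only [Finset.mem_sigma, Finset.mem_range] at h ⊢
    omega
  · rintro ⟨a, b⟩ h
    simp only [Finset.mem_sigma, Finset.mem_range] at h ⊢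
    omega
  · rintro ⟨r, s⟩ h
    simp only [Finset.mem_sigma, Finset.mem_range] at h
    simp only [Sigma.mk.inj_iff, heq_eq_eq]
    exact ⟨by omega, trivial⟩
  · rintro ⟨a, b⟩ h
    simp only [Finset.mem_sigma, Finset.mem_range] at h
    simp only [Sigma.mk.inj_iff, heq_eq_eq]
    exact ⟨trivial, by omega⟩
  · rintro ⟨r, s⟩ h
    simp only [Finset.mem_sigma, Finset.mem_range] at h
    rw [show n - s - (r - s) = n - r by omega]

private lemma triB {M : Type*} [AddCommMonoid M] (f : ℕ → ℕ → ℕ → M) (n : ℕ) :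
    ∑ r ∈ range (n + 1), ∑ s ∈ range r, f s (r - 1 - s) (n - r)
      = ∑ r ∈ range n, ∑ s ∈ range (n - 1 - r + 1), f r s (n - 1 - r - s) := by
  rw [Finset.sum_sigma', Finset.sum_sigma']
  refine Finset.sum_nbij' (fun p => ⟨p.2, p.1 - 1 - p.2⟩) (fun p => ⟨p.1 + p.2 + 1, p.1⟩)
    ?_ ?_ ?_ ?_ ?_
  · rintro ⟨r, s⟩ h
    simp only [Finset.mem_sigma, Finset.mem_range] at h ⊢
    omega
  · rintro ⟨a, b⟩ h
    simp only [Finset.mem_sigma, Finset.mem_range] at h ⊢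
    omega
  · rintro ⟨r, s⟩ h
    simp only [Finset.mem_sigma, Finset.mem_range] at h
    simp only [Sigma.mk.inj_iff, heq_eq_eq]
    exact ⟨by omega, trivial⟩
  · rintro ⟨a, b⟩ h
    simp only [Finset.mem_sigma, Finset.mem_range] at h
    simp only [Sigma.mk.inj_iff, heq_eq_eq]
    exact ⟨trivial, by omega⟩
  · rintro ⟨r, s⟩ h
    simp only [Finset.mem_sigma, Finset.mem_range] at h
    rw [show n - 1 - s - (r - 1 - s) = n - r by omega]

private lemma triC {M : Type*} [AddCommMonoid M] (f : ℕ → ℕ → ℕ → M) (n : ℕ) :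
    ∑ r ∈ range n, ∑ s ∈ range (r + 1), f s (r - s) (n - 1 - r)
      = ∑ r ∈ range (n + 1), ∑ s ∈ range (n - r), f r s (n - r - 1 - s) := by
  rw [Finset.sum_sigma', Finset.sum_sigma']
  refine Finset.sum_nbij' (fun p => ⟨p.2, p.1 - p.2⟩) (fun p => ⟨p.1 + p.2, p.1⟩) ?_ ?_ ?_ ?_ ?_
  · rintro ⟨r, s⟩ h
    simp only [Finset.mem_sigma, Finset.mem_range] at h ⊢
    omega
  · rintro ⟨a, b⟩ h
    simp only [Finset.mem_sigma, Finset.mem_range] at h ⊢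
    omega
  · rintro ⟨r, s⟩ h
    simp only [Finset.mem_sigma, Finset.mem_range] at h
    simp only [Sigma.mk.inj_iff, heq_eq_eq]
    exact ⟨by omega, trivial⟩
  · rintro ⟨a, b⟩ h
    simp only [Finset.mem_sigma, Finset.mem_range] at h
    simp only [Sigma.mk.inj_iff, heq_eq_eq]
    exact ⟨trivial, by omega⟩
  · rintro ⟨r, s⟩ h
    simp only [Finset.mem_sigma, Finset.mem_range] at h
    rw [show n - s - 1 - (r - s) = n - 1 - r by omega]

private lemma triD {M : Type*} [AddCommMonoid M] (f : ℕ → ℕ → ℕ → M) (n : ℕ) :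
    ∑ r ∈ range n, ∑ s ∈ range r, f s (r - 1 - s) (n - 1 - r)
      = ∑ r ∈ range n, ∑ s ∈ range (n - 1 - r), f r s (n - 1 - r - 1 - s) := by
  rw [Finset.sum_sigma', Finset.sum_sigma']
  refine Finset.sum_nbij' (fun p => ⟨p.2, p.1 - 1 - p.2⟩) (fun p => ⟨p.1 + p.2 + 1, p.1⟩)
    ?_ ?_ ?_ ?_ ?_
  · rintro ⟨r, s⟩ h
    simp only [Finset.mem_sigma, Finset.mem_range] at h ⊢
    omega
  · rintro ⟨a, b⟩ h
    simp only [Finset.mem_sigma, Finset.mem_range] at h ⊢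
    omega
  · rintro ⟨r, s⟩ h
    simp only [Finset.mem_sigma, Finset.mem_range] at h
    simp only [Sigma.mk.inj_iff, heq_eq_eq]
    exact ⟨by omega, trivial⟩
  · rintro ⟨a, b⟩ h
    simp only [Finset.mem_sigma, Finset.mem_range] at h
    simp only [Sigma.mk.inj_iff, heq_eq_eq]
    exact ⟨trivial, by omega⟩
  · rintro ⟨r, s⟩ h
    simp only [Finset.mem_sigma, Finset.mem_range] at h
    rw [show n - 1 - s - 1 - (r - 1 - s) = n - 1 - r by omega]

end aux

/-- The basis vectors `u n = single n 1` of the free `k`-module `ℕ →₀ k`. -/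
noncomputable def uvec {k : Type*} [CommRing k] (n : ℕ) : ℕ →₀ k := Finsupp.single n 1

/-- The coproduct `Δ(u_0) = u_0 ⊗ u_0`,
`Δ(u_n) = Σ_{r=0}^{n} u_r ⊗ u_{n-r} + λ • Σ_{r=0}^{n-1} u_r ⊗ u_{n-1-r}` (`n ≥ 1`) is
coassociative: `(Δ ⊗ id) ∘ Δ = (id ⊗ Δ) ∘ Δ` (up to the associator of threefold tensor
products). -/
theorem stmt_16 {k : Type*} [CommRing k] (lam : k)
    (Δ : (ℕ →₀ k) →ₗ[k] (ℕ →₀ k) ⊗[k] (ℕ →₀ k))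
    (h0 : Δ (uvec 0) = uvec 0 ⊗ₜ[k] uvec 0)
    (hΔ : ∀ n : ℕ, Δ (uvec (n + 1)) =
      (∑ r ∈ Finset.range (n + 2), uvec r ⊗ₜ[k] (uvec (n + 1 - r) : ℕ →₀ k)) +
        lam • ∑ r ∈ Finset.range (n + 1), uvec r ⊗ₜ[k] (uvec (n - r) : ℕ →₀ k)) :
    ∀ x : ℕ →₀ k,
      (TensorProduct.assoc k (ℕ →₀ k) (ℕ →₀ k) (ℕ →₀ k))
          ((LinearMap.rTensor (ℕ →₀ k) Δ) (Δ x)) =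
        (LinearMap.lTensor (ℕ →₀ k) Δ) (Δ x) := by
  have hgen : ∀ n : ℕ, Δ (uvec n) =
      (∑ r ∈ Finset.range (n + 1), uvec r ⊗ₜ[k] (uvec (n - r) : ℕ →₀ k)) +
        lam • ∑ r ∈ Finset.range n, uvec r ⊗ₜ[k] (uvec (n - 1 - r) : ℕ →₀ k) := by
    intro n
    cases n with
    | zero => simpa using h0
    | succ m => simpa using hΔ m
  have termL : ∀ a b : ℕ,
      (TensorProduct.assoc k (ℕ →₀ k) (ℕ →₀ k) (ℕ →₀ k))
          ((LinearMap.rTensor (ℕ →₀ k) Δ) (uvec a ⊗ₜ[k] uvec b)) =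
        (∑ s ∈ Finset.range (a + 1),
            uvec s ⊗ₜ[k] ((uvec (a - s) : ℕ →₀ k) ⊗ₜ[k] uvec b)) +
          lam • ∑ s ∈ Finset.range a,
            uvec s ⊗ₜ[k] ((uvec (a - 1 - s) : ℕ →₀ k) ⊗ₜ[k] uvec b) := by
    intro a b
    rw [LinearMap.rTensor_tmul, hgen a, add_tmul, ← smul_tmul', sum_tmul, sum_tmul,
      ← LinearEquiv.coe_coe, map_add, map_smul, map_sum, map_sum]
    simp only [LinearEquiv.coe_coe, TensorProduct.assoc_tmul]
  have termR : ∀ a b : ℕ,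
      (LinearMap.lTensor (ℕ →₀ k) Δ) (uvec a ⊗ₜ[k] uvec b) =
        (∑ s ∈ Finset.range (b + 1),
            uvec a ⊗ₜ[k] ((uvec s : ℕ →₀ k) ⊗ₜ[k] uvec (b - s))) +
          lam • ∑ s ∈ Finset.range b,
            uvec a ⊗ₜ[k] ((uvec s : ℕ →₀ k) ⊗ₜ[k] uvec (b - 1 - s)) := by
    intro a b
    rw [LinearMap.lTensor_tmul, hgen b, tmul_add, tmul_smul, tmul_sum, tmul_sum]
  have key : ∀ n : ℕ,
      (TensorProduct.assoc k (ℕ →₀ k) (ℕ →₀ k) (ℕ →₀ k))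
          ((LinearMap.rTensor (ℕ →₀ k) Δ) (Δ (uvec n))) =
        (LinearMap.lTensor (ℕ →₀ k) Δ) (Δ (uvec n)) := by
    intro n
    rw [hgen n]
    simp only [← LinearEquiv.coe_coe]
    simp only [map_add, map_smul, map_sum]
    simp only [LinearEquiv.coe_coe]
    rw [Finset.sum_congr rfl (fun r _ => termL r (n - r)),
        Finset.sum_congr rfl (fun r _ => termL r (n - 1 - r)),
        Finset.sum_congr rfl (fun r _ => termR r (n - r)),
        Finset.sum_congr rfl (fun r _ => termR r (n - 1 - r))]
    simp only [Finset.sum_add_distrib, smul_add, Finset.smul_sum]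
    rw [triA (fun a b c => uvec a ⊗ₜ[k] ((uvec b : ℕ →₀ k) ⊗ₜ[k] (uvec c : ℕ →₀ k))) n,
      triB (fun a b c =>
        lam • (uvec a ⊗ₜ[k] ((uvec b : ℕ →₀ k) ⊗ₜ[k] (uvec c : ℕ →₀ k)))) n,
      triC (fun a b c =>
        lam • (uvec a ⊗ₜ[k] ((uvec b : ℕ →₀ k) ⊗ₜ[k] (uvec c : ℕ →₀ k)))) n,
      triD (fun a b c =>
        lam • lam • (uvec a ⊗ₜ[k] ((uvec b : ℕ →₀ k) ⊗ₜ[k] (uvec c : ℕ →₀ k)))) n]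
    abel
  intro x
  induction x using Finsupp.induction_linear with
  | zero =>
    rw [LinearMap.map_zero Δ, LinearMap.map_zero (LinearMap.rTensor (ℕ →₀ k) Δ), LinearEquiv.map_zero,
      LinearMap.map_zero (LinearMap.lTensor (ℕ →₀ k) Δ)]
  | add f g hf hg =>
    rw [LinearMap.map_add Δ f g, LinearMap.map_add (LinearMap.rTensor (ℕ →₀ k) Δ), LinearEquiv.map_add, hf, hg,
      LinearMap.map_add (LinearMap.lTensor (ℕ →₀ k) Δ)]
  | single a b =>
    have h1 : (Finsupp.single a b : ℕ →₀ k) = b • uvec a := by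
      simp [uvec, Finsupp.smul_single]
    rw [h1, LinearMap.map_smul Δ, LinearMap.map_smul (LinearMap.rTensor (ℕ →₀ k) Δ), LinearEquiv.map_smul,
      LinearMap.map_smul (LinearMap.lTensor (ℕ →₀ k) Δ), key a]
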